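/- Let ψ⁰ : ℝ → ℝ be twice differentiable, and define ψ¹(t) = (ψ⁰)'(t) + α₀·ψ⁰(t) for a constant α₀ > 0. If ψ⁰(0) ≥ 0, ψ¹(0) ≥ 0, and (ψ¹)'(t) + α₁·ψ¹(t) ≥ 0 for all t ≥ 0 with constant α₁ > 0, then ψ⁰(t) ≥ 0 and ψ¹(t) ≥ 0 for all t ≥ 0. -/

import Mathlib

open Real

lemma gronwall_nonneg (f : ℝ → ℝ) (α : ℝ) (hf : Differentiable ℝ f)
    (h0 : 0 ≤ f 0) (h : ∀ t ≥ (0:ℝ), deriv f t + α * f t ≥ 0) :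
    ∀ t ≥ (0:ℝ), 0 ≤ f t := by
  intro t ht
  set g : ℝ → ℝ := fun s => f s * Real.exp (α * s) with hg
  have hgd : ∀ s, HasDerivAt g ((deriv f s + α * f s) * Real.exp (α * s)) s := by
    intro s
    have h1 : HasDerivAt (fun s : ℝ => Real.exp (α * s)) (α * Real.exp (α * s)) s := by
      simpa [mul_comm] using ((hasDerivAt_id s).const_mul α).exp
    have this : HasDerivAt (fun y => f y * Real.exp (α * y))
        (deriv f s * Real.exp (α * s) + f s * (α * Real.exp (α * s))) s := ((hf s).hasDerivAt).mul h1
    convert this using 1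
    ring
  have hmono : MonotoneOn g (Set.Ici 0) := by
    apply monotoneOn_of_deriv_nonneg (convex_Ici 0)
      (Continuous.continuousOn (by
        exact (hf.continuous.mul (Real.continuous_exp.comp (continuous_const.mul continuous_id)))))
      (fun s hs => (hgd s).differentiableAt.differentiableWithinAt)
    intro s hs
    rw [(hgd s).deriv]
    have hs' : (0:ℝ) ≤ s := le_of_lt (by simpa using hs)
    exact mul_nonneg (h s hs') (Real.exp_pos _).le
  have hge : g 0 ≤ g t := hmono (Set.self_mem_Ici) (Set.mem_Ici.mpr ht) ht
  have hg0 : 0 ≤ g 0 := by simpa [hg] using h0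
  have : 0 ≤ g t := le_trans hg0 hge
  have hexp : 0 < Real.exp (α * t) := Real.exp_pos _
  have h2 : 0 ≤ f t * Real.exp (α * t) := by simpa [hg] using this
  nlinarith [h2, hexp]

/-- Second-order HOCBF forward invariance with linear class-K functions. -/
theorem hocbf_second_order_invariance (ψ0 : ℝ → ℝ) (α0 α1 : ℝ)
    (hα0 : 0 < α0) (hα1 : 0 < α1)
    (hd : Differentiable ℝ ψ0) (hd2 : Differentiable ℝ (deriv ψ0))
    (ψ1 : ℝ → ℝ) (hψ1 : ψ1 = fun t => deriv ψ0 t + α0 * ψ0 t)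
    (h0 : 0 ≤ ψ0 0) (h1 : 0 ≤ ψ1 0)
    (hineq : ∀ t ≥ (0 : ℝ), deriv ψ1 t + α1 * ψ1 t ≥ 0) :
    ∀ t ≥ (0 : ℝ), 0 ≤ ψ0 t ∧ 0 ≤ ψ1 t := by
  have hψ1d : Differentiable ℝ ψ1 := by
    rw [hψ1]; exact hd2.add (hd.const_mul α0)
  have hψ1nn : ∀ t ≥ (0:ℝ), 0 ≤ ψ1 t := gronwall_nonneg ψ1 α1 hψ1d h1 hineq
  have hψ0nn : ∀ t ≥ (0:ℝ), 0 ≤ ψ0 t := by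
    apply gronwall_nonneg ψ0 α0 hd h0
    intro t ht
    have := hψ1nn t ht
    rw [hψ1] at this
    simpa using this
  exact fun t ht => ⟨hψ0nn t ht, hψ1nn t ht⟩
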